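/- Let N be an odd positive integer and suppose unitaries U_T on ℂ^N satisfy U_T·A(v)·U_T† = A(T(v)) for all v ∈ (ZMod N)² and all T in the Margulis set 𝒮. Let Λ_N(ρ) = (1/8)·Σ_{T∈𝒮} U_T·ρ·U_T† and let M_N be the classical Margulis walk operator on functions f : (ZMod N)² → ℂ, (M_N f)(v) = (1/8)·Σ_{T∈𝒮} f(T⁻¹(v)). Then the linear bijection X ↦ W_X from N×N matrices to functions on (ZMod N)² intertwines Λ_N and M_N (that is, W_{Λ_N(X)} = M_N(W_X) for all X); consequently the linear endomorphism Λ_N of the matrix space and the linear endomorphism M_N have exactly the same eigenvalues. -/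

import Mathlib

open Matrix BigOperators

noncomputable section

/-- `ω = exp(2πi/N)`, a primitive `N`-th root of unity. -/
def omegaN (N : ℕ) : ℂ := Complex.exp (2 * Real.pi * Complex.I / N)

/-- The shift operator `x(q)|k⟩ = |k+q⟩`. -/
def shiftOp (N : ℕ) [NeZero N] (q : ZMod N) : Matrix (ZMod N) (ZMod N) ℂ :=
  Matrix.of fun k l => if k = l + q then 1 else 0

/-- The boost operator `z(p)|k⟩ = ω^{pk}|k⟩`. -/
def boostOp (N : ℕ) [NeZero N] (p : ZMod N) : Matrix (ZMod N) (ZMod N) ℂ :=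
  Matrix.diagonal fun k => omegaN N ^ (p * k).val

/-- The Weyl operator `w(p,q) = ω^{−2⁻¹pq} z(p) x(q)`. -/
def weylOp (N : ℕ) [NeZero N] (p q : ZMod N) : Matrix (ZMod N) (ZMod N) ℂ :=
  omegaN N ^ ((-(2⁻¹ : ZMod N) * p * q).val) • (boostOp N p * shiftOp N q)

/-- The parity operator `A(0,0)|x⟩ = |−x⟩`. -/
def parityOp (N : ℕ) [NeZero N] : Matrix (ZMod N) (ZMod N) ℂ :=
  Matrix.of fun k l => if k = -l then 1 else 0

/-- The phase space operators `A(p,q) = w(p,q) A(0,0) w(p,q)†`. -/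
def phaseOp (N : ℕ) [NeZero N] (a : ZMod N × ZMod N) : Matrix (ZMod N) (ZMod N) ℂ :=
  weylOp N a.1 a.2 * parityOp N * (weylOp N a.1 a.2)ᴴ

/-- The discrete Wigner function `W_X(v) = (1/N)·tr(A(v)·X)`. -/
def wigner (N : ℕ) [NeZero N] (X : Matrix (ZMod N) (ZMod N) ℂ) (v : ZMod N × ZMod N) : ℂ :=
  (1 / (N : ℂ)) * (phaseOp N v * X).trace

/-- The eight Margulis transformations, over any commutative ring.
Indices 0–3 are `T₁(v) = S₁v`, `T₂(v) = S₁v + (1,0)ᵀ`, `T₃(v) = S₂v`,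
`T₄(v) = S₂v − (0,1)ᵀ` with `S₁ = [[1,2],[0,1]]`, `S₂ = [[1,0],[2,1]]`;
indices 4–7 are their respective inverses. -/
def marg {R : Type*} [CommRing R] : Fin 8 → R × R → R × R
  | 0 => fun v => (v.1 + 2 * v.2, v.2)
  | 1 => fun v => (v.1 + 2 * v.2 + 1, v.2)
  | 2 => fun v => (v.1, v.2 + 2 * v.1)
  | 3 => fun v => (v.1, v.2 + 2 * v.1 - 1)
  | 4 => fun v => (v.1 - 2 * v.2, v.2)
  | 5 => fun v => (v.1 - 2 * v.2 - 1, v.2)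
  | 6 => fun v => (v.1, v.2 - 2 * v.1)
  | 7 => fun v => (v.1, v.2 - 2 * v.1 + 1)

/-- The inverse of the `i`-th Margulis transformation (the family is closed under
inverses: `marg (i+4)` is the inverse of `marg i`). -/
def margInv {R : Type*} [CommRing R] (i : Fin 8) : R × R → R × R := marg (i + 4)

/-- The classical Margulis walk operator on functions `(ZMod N)² → ℂ`:
`(M_N f)(v) = (1/8)·Σ_T f(T⁻¹(v))`. -/
def margWalk (N : ℕ) (f : ZMod N × ZMod N → ℂ) : ZMod N × ZMod N → ℂ :=
  fun v => (1 / 8 : ℂ) * ∑ i : Fin 8, f (margInv i v)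

/-! ### Auxiliary machinery -/

/-- The character `m ↦ ω^{m.val}`. -/
def eN (N : ℕ) [NeZero N] (m : ZMod N) : ℂ := omegaN N ^ m.val

section Aux

variable (N : ℕ) [NeZero N]

set_option linter.unusedSectionVars false

lemma omegaN_prim : IsPrimitiveRoot (omegaN N) N :=
  Complex.isPrimitiveRoot_exp N (NeZero.ne N)

lemma omegaN_pow_N : omegaN N ^ N = 1 := (omegaN_prim N).pow_eq_one

lemma omegaN_pow_mod (x : ℕ) : omegaN N ^ (x % N) = omegaN N ^ x := by
  conv_rhs => rw [← Nat.mod_add_div x N]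
  rw [pow_add, pow_mul, omegaN_pow_N, one_pow, mul_one]

lemma eN_natCast (x : ℕ) : eN N (x : ZMod N) = omegaN N ^ x := by
  rw [eN, ZMod.val_natCast, omegaN_pow_mod]

lemma eN_add (a b : ZMod N) : eN N (a + b) = eN N a * eN N b := by
  have h : ((a.val + b.val : ℕ) : ZMod N) = a + b := by
    push_cast
    simp [ZMod.natCast_val, ZMod.cast_id]
  calc eN N (a + b) = omegaN N ^ (a.val + b.val) := by rw [← h, eN_natCast]
    _ = eN N a * eN N b := by rw [pow_add]; rfl

lemma eN_zero : eN N 0 = 1 := by simp [eN]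

lemma eN_mul_neg (m : ZMod N) : eN N m * eN N (-m) = 1 := by
  rw [← eN_add]; simp [eN_zero]

lemma eN_ne_zero (m : ZMod N) : eN N m ≠ 0 := by
  intro h
  have := eN_mul_neg N m
  rw [h, zero_mul] at this
  exact one_ne_zero this.symm

lemma abs_omegaN : ‖omegaN N‖ = 1 := by
  have : omegaN N = Complex.exp ((2 * Real.pi / N : ℝ) * Complex.I) := by
    rw [omegaN]; push_cast; ring_nf
  rw [this, Complex.norm_exp_ofReal_mul_I]

lemma conj_eN (m : ZMod N) : (starRingEnd ℂ) (eN N m) = eN N (-m) := by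
  have h2 : eN N m * (starRingEnd ℂ) (eN N m) = 1 := by
    rw [Complex.mul_conj, Complex.normSq_eq_norm_sq, eN, norm_pow, abs_omegaN, one_pow]
    norm_num
  exact mul_left_cancel₀ (eN_ne_zero N m) (h2.trans (eN_mul_neg N m).symm)

lemma sum_range_omegaN (j : ℕ) (hj0 : j ≠ 0) (hj : j < N) :
    ∑ i ∈ Finset.range N, (omegaN N ^ j) ^ i = 0 := by
  have hne : omegaN N ^ j ≠ 1 :=
    (omegaN_prim N).pow_ne_one_of_pos_of_lt hj0 hj
  rw [geom_sum_eq hne, ← pow_mul, mul_comm, pow_mul, omegaN_pow_N, one_pow,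
    sub_self, zero_div]

lemma sum_eN (m : ZMod N) : ∑ k : ZMod N, eN N (m * k) = if m = 0 then (N : ℂ) else 0 := by
  have hrw : ∀ k : ZMod N, eN N (m * k) = (omegaN N ^ m.val) ^ k.val := by
    intro k
    rw [← pow_mul, ← omegaN_pow_mod N (m.val * k.val), ← ZMod.val_mul]; rfl
  have hre : ∑ k : ZMod N, eN N (m * k) = ∑ i ∈ Finset.range N, (omegaN N ^ m.val) ^ i := by
    refine Finset.sum_nbij' (fun k => k.val) (fun i => (i : ZMod N)) ?_ ?_ ?_ ?_ ?_
    · intro a _; exact Finset.mem_range.mpr (ZMod.val_lt a)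
    · intro a _; exact Finset.mem_univ _
    · intro a _; simp [ZMod.natCast_val, ZMod.cast_id]
    · intro a ha; exact ZMod.val_cast_of_lt (Finset.mem_range.mp ha)
    · intro a _; exact hrw a
  rw [hre]
  by_cases hm : m = 0
  · simp [hm, ZMod.val_zero]
  · rw [if_neg hm]
    exact sum_range_omegaN N m.val (fun h => hm ((ZMod.val_eq_zero m).mp h)) (ZMod.val_lt m)

lemma two_isUnit (hN : Odd N) : IsUnit (2 : ZMod N) := by
  have := (ZMod.isUnit_iff_coprime 2 N).mpr hN.coprime_two_left
  simpa using this

lemma two_mul_inv (hN : Odd N) : (2 : ZMod N) * 2⁻¹ = 1 :=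
  ZMod.mul_inv_of_unit 2 (two_isUnit N hN)

lemma two_mul_eq_zero (hN : Odd N) {a : ZMod N} (h : 2 * a = 0) : a = 0 := by
  have := congrArg (fun x => (2⁻¹ : ZMod N) * x) h
  simpa [← mul_assoc, mul_comm (2⁻¹ : ZMod N) 2, two_mul_inv N hN] using this

lemma sum_eN_shift (m t : ZMod N) :
    ∑ k : ZMod N, eN N (m * (k - t)) = if m = 0 then (N : ℂ) else 0 := by
  rw [← sum_eN N m]
  exact Fintype.sum_equiv (Equiv.subRight t) _ _ (fun k => rfl)

lemma weylOp_apply (p q k l : ZMod N) :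
    weylOp N p q k l = if k = l + q then eN N (-(2⁻¹ : ZMod N) * p * q + p * k) else 0 := by
  simp only [weylOp, boostOp, shiftOp, Matrix.smul_apply, Matrix.diagonal_mul, Matrix.of_apply,
    smul_eq_mul, mul_ite, mul_one, mul_zero, eN_add]
  rfl

lemma phaseOp_apply (v : ZMod N × ZMod N) (k l : ZMod N) :
    phaseOp N v k l = if k = 2 * v.2 - l then eN N (v.1 * (k - l)) else 0 := by
  obtain ⟨p, q⟩ := v
  set c : ZMod N := -(2⁻¹ : ZMod N) * p * q with hc
  have h1 : ∀ k l : ZMod N, (weylOp N p q * parityOp N) k l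
      = if k = -l + q then eN N (c + p * k) else 0 := by
    intro k l
    simp only [Matrix.mul_apply, weylOp_apply, parityOp, Matrix.of_apply, mul_ite, mul_one,
      mul_zero, ite_mul, zero_mul]
    rw [Finset.sum_ite_eq' Finset.univ (-l) (fun j => if k = j + q then eN N (c + p * k) else 0)]
    simp
  show (weylOp N p q * parityOp N * (weylOp N p q)ᴴ) k l = _
  simp only [Matrix.mul_apply, h1, Matrix.conjTranspose_apply, weylOp_apply]
  have hstar : ∀ (P : Prop) [Decidable P] (z : ℂ), star (if P then z else (0:ℂ)) = if P then star z else 0 := by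
    intro P _ z; split <;> simp
  simp only [hstar]
  have hsz : ∀ m : ZMod N, star (eN N m) = eN N (-m) := fun m => conj_eN N m
  simp only [hsz, mul_ite, mul_zero, ite_mul, zero_mul]
  have hcond : ∀ j : ZMod N, (l = j + q) = (j = l - q) := by
    intro j; apply propext; constructor <;> intro h <;> subst h <;> ring
  simp only [hcond]
  rw [Finset.sum_ite_eq' Finset.univ (l - q)
    (fun j => if k = -j + q then eN N (c + p * k) * eN N (-(c + p * l)) else 0)]
  simp only [Finset.mem_univ, if_true]
  have h2 : -(l - q) + q = 2 * q - l := by ring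
  rw [h2]
  have h3 : eN N (c + p * k) * eN N (-(c + p * l)) = eN N (p * (k - l)) := by
    rw [← eN_add]; congr 1; ring
  rw [h3]

lemma wigner_eq (X : Matrix (ZMod N) (ZMod N) ℂ) (v : ZMod N × ZMod N) :
    wigner N X v = (1 / (N : ℂ)) * ∑ k : ZMod N, eN N (v.1 * (2 * k - 2 * v.2)) * X (2 * v.2 - k) k := by
  rw [wigner]
  congr 1
  rw [Matrix.trace]
  simp only [Matrix.diag_apply, Matrix.mul_apply, phaseOp_apply, ite_mul, zero_mul]
  refine Finset.sum_congr rfl fun k _ => ?_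
  have hcond : ∀ j : ZMod N, (k = 2 * v.2 - j) = (j = 2 * v.2 - k) := by
    intro j; apply propext; constructor <;> intro h <;> subst h <;> ring
  simp only [hcond]
  rw [Finset.sum_ite_eq' Finset.univ (2 * v.2 - k) (fun j => eN N (v.1 * (k - j)) * X j k)]
  simp only [Finset.mem_univ, if_true]
  congr 2
  ring

/-- Explicit inverse of the Wigner transform. -/
def wignerInv (f : ZMod N × ZMod N → ℂ) : Matrix (ZMod N) (ZMod N) ℂ :=
  Matrix.of fun a b => ∑ p : ZMod N, eN N (p * (a - b)) * f (p, (2⁻¹ : ZMod N) * (a + b))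

lemma wigner_wignerInv (hN : Odd N) (f : ZMod N × ZMod N → ℂ) :
    wigner N (wignerInv N f) = f := by
  funext v
  obtain ⟨p, q⟩ := v
  rw [wigner_eq]
  simp only [wignerInv, Matrix.of_apply]
  have harg1 : ∀ k : ZMod N, (2 * q - k) + k = 2 * q := by intro k; ring
  have harg2 : (2⁻¹ : ZMod N) * (2 * q) = q := by
    rw [← mul_assoc, mul_comm (2⁻¹ : ZMod N) 2, two_mul_inv N hN, one_mul]
  simp only [harg1, harg2]
  have hswap : ∑ k : ZMod N, eN N (p * (2 * k - 2 * q)) * ∑ p' : ZMod N, eN N (p' * (2*q - k - k)) * f (p', q)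
      = ∑ p' : ZMod N, (∑ k : ZMod N, eN N (((p - p') * 2) * (k - q))) * f (p', q) := by
    simp only [Finset.mul_sum]
    rw [Finset.sum_comm]
    refine Finset.sum_congr rfl fun p' _ => ?_
    rw [Finset.sum_mul]
    refine Finset.sum_congr rfl fun k _ => ?_
    rw [← mul_assoc, ← eN_add]
    congr 2
    ring
  rw [hswap]
  have hite : ∀ p' : ZMod N, (∑ k : ZMod N, eN N (((p - p') * 2) * (k - q))) * f (p', q)
      = if p' = p then (N : ℂ) * f (p', q) else 0 := by
    intro p'
    rw [sum_eN_shift]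
    by_cases h : p' = p
    · have : (p - p') * 2 = 0 := by rw [h]; ring
      rw [if_pos this, if_pos h]
    · have : ¬ ((p - p') * 2 = 0) := by
        intro hz
        apply h
        have := two_mul_eq_zero N hN (a := p - p') (by rw [← hz]; ring)
        have := sub_eq_zero.mp this
        exact this.symm
      rw [if_neg this, if_neg h, zero_mul]
  simp only [hite]
  rw [Finset.sum_ite_eq' Finset.univ p (fun p' => (N : ℂ) * f (p', q))]
  have hNne : (N : ℂ) ≠ 0 := Nat.cast_ne_zero.mpr (NeZero.ne N)
  simp [hNne]

lemma wignerInv_wigner (hN : Odd N) (X : Matrix (ZMod N) (ZMod N) ℂ) :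
    wignerInv N (wigner N X) = X := by
  ext a b
  simp only [wignerInv, Matrix.of_apply]
  have h2m : 2 * ((2⁻¹ : ZMod N) * (a + b)) = a + b := by
    rw [← mul_assoc, two_mul_inv N hN, one_mul]
  have hwig : ∀ p : ZMod N, wigner N X (p, (2⁻¹ : ZMod N) * (a + b))
      = (1 / (N : ℂ)) * ∑ k : ZMod N, eN N (p * (2 * k - (a + b))) * X (a + b - k) k := by
    intro p
    rw [wigner_eq]
    simp only [h2m]
  simp only [hwig]
  have hswap : ∑ p : ZMod N, eN N (p * (a - b)) *
        ((1 / (N : ℂ)) * ∑ k : ZMod N, eN N (p * (2 * k - (a + b))) * X (a + b - k) k)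
      = ∑ k : ZMod N, (1 / (N : ℂ)) * ((∑ p : ZMod N, eN N (((k - b) * 2) * p)) * X (a + b - k) k) := by
    simp only [Finset.mul_sum, Finset.sum_mul]
    rw [Finset.sum_comm]
    refine Finset.sum_congr rfl fun k _ => Finset.sum_congr rfl fun p _ => ?_
    have he : eN N (p * (a - b)) * eN N (p * (2 * k - (a + b))) = eN N (((k - b) * 2) * p) := by
      rw [← eN_add]; congr 1; ring
    linear_combination ((1 / (N : ℂ)) * X (a + b - k) k) * he
  rw [hswap]
  have hite : ∀ k : ZMod N, (1 / (N : ℂ)) * ((∑ p : ZMod N, eN N (((k - b) * 2) * p)) * X (a + b - k) k)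
      = if k = b then (1 / (N : ℂ)) * ((N : ℂ) * X (a + b - k) k) else 0 := by
    intro k
    rw [sum_eN]
    by_cases h : k = b
    · have : (k - b) * 2 = 0 := by rw [h]; ring
      rw [if_pos this, if_pos h]
    · have : ¬ ((k - b) * 2 = 0) := by
        intro hz
        exact h (sub_eq_zero.mp (two_mul_eq_zero N hN (by rw [← hz]; ring)))
      rw [if_neg this, if_neg h, zero_mul, mul_zero]
  simp only [hite]
  rw [Finset.sum_ite_eq' Finset.univ b (fun k => (1 / (N : ℂ)) * ((N : ℂ) * X (a + b - k) k))]
  have hNne : (N : ℂ) ≠ 0 := Nat.cast_ne_zero.mpr (NeZero.ne N)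
  have hab : a + b - b = a := by ring
  simp [hab, hNne]

end Aux

lemma marg_margInv {R : Type*} [CommRing R] (i : Fin 8) (v : R × R) :
    marg i (margInv i v) = v := by
  fin_cases i <;> simp [marg, margInv] <;> refine Prod.ext ?_ ?_ <;> simp <;> ring

/-- the (bijective) map `X ↦ W_X` intertwines the quantum Margulis channel
`Λ_N` with the classical walk operator `M_N`; consequently `Λ_N` and `M_N` have exactly
the same eigenvalues. -/
theorem quantum_margulis_intertwine_and_spectrum (N : ℕ) [NeZero N] (hN : Odd N)
    (U : Fin 8 → Matrix (ZMod N) (ZMod N) ℂ)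
    (hU : ∀ i, U i ∈ Matrix.unitaryGroup (ZMod N) ℂ)
    (hcov : ∀ i (v : ZMod N × ZMod N), U i * phaseOp N v * (U i)ᴴ = phaseOp N (marg i v)) :
    Function.Bijective (fun X : Matrix (ZMod N) (ZMod N) ℂ => wigner N X)
    ∧ (∀ X : Matrix (ZMod N) (ZMod N) ℂ,
        wigner N ((1 / 8 : ℂ) • ∑ i : Fin 8, U i * X * (U i)ᴴ) = margWalk N (wigner N X))
    ∧ (∀ c : ℂ,
        (∃ X : Matrix (ZMod N) (ZMod N) ℂ, X ≠ 0 ∧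
            (1 / 8 : ℂ) • ∑ i : Fin 8, U i * X * (U i)ᴴ = c • X)
        ↔ (∃ f : ZMod N × ZMod N → ℂ, f ≠ 0 ∧ margWalk N f = c • f)) := by
  have hbij : Function.Bijective (fun X : Matrix (ZMod N) (ZMod N) ℂ => wigner N X) :=
    Function.bijective_iff_has_inverse.mpr
      ⟨wignerInv N, fun X => wignerInv_wigner N hN X, fun f => wigner_wignerInv N hN f⟩
  have hsmul : ∀ (c : ℂ) (X : Matrix (ZMod N) (ZMod N) ℂ),
      wigner N (c • X) = c • wigner N X := by
    intro c X
    funext v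
    simp only [wigner, Matrix.mul_smul, Matrix.trace_smul, smul_eq_mul, Pi.smul_apply]
    ring
  have hzero : wigner N (0 : Matrix (ZMod N) (ZMod N) ℂ) = 0 := by
    funext v
    simp [wigner]
  have hint : ∀ X : Matrix (ZMod N) (ZMod N) ℂ,
      wigner N ((1 / 8 : ℂ) • ∑ i : Fin 8, U i * X * (U i)ᴴ) = margWalk N (wigner N X) := by
    intro X
    funext v
    have hkey : ∀ i : Fin 8,
        (phaseOp N v * (U i * X * (U i)ᴴ)).trace = (phaseOp N (margInv i v) * X).trace := by
      intro i
      have hUi : (U i)ᴴ * U i = 1 := by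
        have := Matrix.mem_unitaryGroup_iff'.mp (hU i)
        simpa [Matrix.star_eq_conjTranspose] using this
      have h1 : phaseOp N v = U i * phaseOp N (margInv i v) * (U i)ᴴ := by
        rw [hcov, marg_margInv]
      rw [h1]
      have hc : ∀ M : Matrix (ZMod N) (ZMod N) ℂ, (U i)ᴴ * (U i * M) = M := by
        intro M; rw [← Matrix.mul_assoc, hUi, Matrix.one_mul]
      have h2 : U i * phaseOp N (margInv i v) * (U i)ᴴ * (U i * X * (U i)ᴴ)
          = U i * (phaseOp N (margInv i v) * (X * (U i)ᴴ)) := by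
        simp only [Matrix.mul_assoc]
        rw [hc]
      rw [h2, Matrix.trace_mul_comm]
      simp only [Matrix.mul_assoc]
      rw [hUi, Matrix.mul_one]
    simp only [wigner, Matrix.mul_smul, Matrix.trace_smul, Matrix.mul_sum, Matrix.trace_sum,
      smul_eq_mul, hkey, margWalk, wigner, Finset.mul_sum]
    refine Finset.sum_congr rfl fun i _ => ?_
    ring
  refine ⟨hbij, hint, fun c => ⟨?_, ?_⟩⟩
  · rintro ⟨X, hX0, hXeig⟩
    refine ⟨wigner N X, ?_, ?_⟩
    · intro hf
      apply hX0
      apply hbij.injective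
      show wigner N X = wigner N 0
      rw [hzero]
      exact hf
    · rw [← hint, hXeig, hsmul]
  · rintro ⟨f, hf0, hfeig⟩
    obtain ⟨X, hX⟩ := hbij.surjective f
    have hX' : wigner N X = f := hX
    refine ⟨X, ?_, ?_⟩
    · intro h0
      apply hf0
      rw [← hX', h0, hzero]
    · apply hbij.injective
      show wigner N ((1 / 8 : ℂ) • ∑ i : Fin 8, U i * X * (U i)ᴴ) = wigner N (c • X)
      rw [hint, hsmul, hX', hfeig]
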